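/- Let $\vec{P}=(p_1,p_2)$ with $1<p_1,p_2<\infty$, $1/p=1/p_1+1/p_2$ and $1<p<\infty$, and let $\vec{w}=(w_1,w_2)\in A_{\vec{P}}$. Then $\vec{w}^{1}=(v_{\vec{w}}^{\,1-p'},\,w_2)$ belongs to $A_{\vec{P}^1}$ with $\vec{P}^1=(p',p_2)$, and moreover $[\vec{w}^{1}]_{A_{\vec{P}^1}}=[\vec{w}]_{A_{\vec{P}}}^{\,p_1'/p}$, where $p'$ and $p_1'$ are the conjugate exponents of $p$ and $p_1$. -/

import Mathlib

open MeasureTheory Set ENNReal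

noncomputable section

/-- Euclidean space `ℝⁿ`. -/
abbrev Rn (n : ℕ) := Fin n → ℝ

/-- `Q` is an axis-parallel (half-open) cube of sidelength `h`. -/
def HasSide {n : ℕ} (Q : Set (Rn n)) (h : ℝ) : Prop :=
  ∃ c : Rn n, Q = {x | ∀ i, c i ≤ x i ∧ x i < c i + h}

/-- `Q` is an axis-parallel cube (with positive sidelength). -/
def IsCube {n : ℕ} (Q : Set (Rn n)) : Prop :=
  ∃ h : ℝ, 0 < h ∧ HasSide Q h

/-- A dyadic cubes system: cubes of sidelengths `2^k`, pairwise nested or disjoint,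
and for each fixed `k` the cubes of sidelength `2^k` cover (hence partition) `ℝⁿ`. -/
def IsDyadicSystem {n : ℕ} (D : Set (Set (Rn n))) : Prop :=
  (∀ Q ∈ D, ∃ k : ℤ, HasSide Q ((2 : ℝ) ^ k)) ∧
  (∀ Q ∈ D, ∀ R ∈ D, Q ∩ R = Q ∨ Q ∩ R = R ∨ Q ∩ R = ∅) ∧
  (∀ k : ℤ, ∀ x : Rn n, ∃ Q ∈ D, HasSide Q ((2 : ℝ) ^ k) ∧ x ∈ Q)

/-- A sparse family: each `Q` carries a measurable subset `E Q ⊆ Q` with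
`|E Q| ≥ |Q|/2`, the sets `E Q` being pairwise disjoint. -/
def IsSparse {n : ℕ} (S : Set (Set (Rn n))) : Prop :=
  ∃ E : Set (Rn n) → Set (Rn n),
    (∀ Q ∈ S, E Q ⊆ Q ∧ MeasurableSet (E Q) ∧ volume Q ≤ 2 * volume (E Q)) ∧
    S.Pairwise fun Q R => Disjoint (E Q) (E R)

/-- A weight: a measurable nonnegative (`ℝ≥0∞`-valued) locally integrable function. -/
def IsWeight {n : ℕ} (w : Rn n → ℝ≥0∞) : Prop :=
  Measurable w ∧ ∀ Q : Set (Rn n), IsCube Q → (∫⁻ x in Q, w x) ≠ ∞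

/-- `w(Q) = ∫_Q w`. -/
def mass {n : ℕ} (w : Rn n → ℝ≥0∞) (Q : Set (Rn n)) : ℝ≥0∞ := ∫⁻ x in Q, w x

/-- `⟨w⟩_Q = w(Q)/|Q|`. -/
def avg {n : ℕ} (w : Rn n → ℝ≥0∞) (Q : Set (Rn n)) : ℝ≥0∞ := mass w Q / volume Q

/-- The conjugate exponent `q' = q/(q-1)`. -/
def conj (q : ℝ) : ℝ := q / (q - 1)

/-- The product weight `v_w = w₁^{p/p₁} w₂^{p/p₂}`. -/
def vweight {n : ℕ} (p p1 p2 : ℝ) (w1 w2 : Rn n → ℝ≥0∞) : Rn n → ℝ≥0∞ :=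
  fun x => w1 x ^ (p / p1) * w2 x ^ (p / p2)

/-- The dual weight `σ = w^{1-q'}`. -/
def dualW {n : ℕ} (q : ℝ) (w : Rn n → ℝ≥0∞) : Rn n → ℝ≥0∞ :=
  fun x => w x ^ (1 - conj q)

/-- The multilinear `A_{\vec P}` constant
`[\vec w]_{A_{\vec P}} = sup_Q ⟨v_w⟩_Q ⟨σ₁⟩_Q^{p/p₁'} ⟨σ₂⟩_Q^{p/p₂'}`. -/
def APconst {n : ℕ} (p p1 p2 : ℝ) (w1 w2 : Rn n → ℝ≥0∞) : ℝ≥0∞ :=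
  ⨆ (Q : Set (Rn n)) (_ : IsCube Q),
    avg (vweight p p1 p2 w1 w2) Q * avg (dualW p1 w1) Q ^ (p / conj p1) *
      avg (dualW p2 w2) Q ^ (p / conj p2)

/-- The (linear) `A_q` constant `[w]_{A_q} = sup_Q ⟨w⟩_Q ⟨w^{1-q'}⟩_Q^{q-1}`. -/
def AqConst {n : ℕ} (q : ℝ) (w : Rn n → ℝ≥0∞) : ℝ≥0∞ :=
  ⨆ (Q : Set (Rn n)) (_ : IsCube Q),
    avg w Q * avg (fun x => w x ^ (1 - conj q)) Q ^ (q - 1)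

/-- The Hardy–Littlewood maximal operator (over axis-parallel cubes). -/
def HLMax {n : ℕ} (w : Rn n → ℝ≥0∞) (x : Rn n) : ℝ≥0∞ :=
  ⨆ (Q : Set (Rn n)) (_ : IsCube Q) (_ : x ∈ Q), avg w Q

/-- The Fujii–Wilson `A_∞` constant `[w]_{A_∞} = sup_Q w(Q)⁻¹ ∫_Q M(wχ_Q)`. -/
def AinfConst {n : ℕ} (w : Rn n → ℝ≥0∞) : ℝ≥0∞ :=
  ⨆ (Q : Set (Rn n)) (_ : IsCube Q), (∫⁻ x in Q, HLMax (Q.indicator w) x) / mass w Q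

/-- `‖g‖_{L^p(v)}` for an `ℝ≥0∞`-valued function. -/
def lpNorm {n : ℕ} (g : Rn n → ℝ≥0∞) (p : ℝ) (v : Rn n → ℝ≥0∞) : ℝ≥0∞ :=
  (∫⁻ x, g x ^ p * v x) ^ (1 / p)

/-- `‖g‖_{L^{p,∞}(v)} = sup_{t>0} t · v({g > t})^{1/p}`. -/
def wkNorm {n : ℕ} (g : Rn n → ℝ≥0∞) (p : ℝ) (v : Rn n → ℝ≥0∞) : ℝ≥0∞ :=
  ⨆ t : ℝ≥0∞, t * mass v {x | t < g x} ^ (1 / p)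

/-- The pointwise `ℝ≥0∞`-valued absolute value of a real function. -/
def eAbs {n : ℕ} (f : Rn n → ℝ) : Rn n → ℝ≥0∞ := fun x => (‖f x‖₊ : ℝ≥0∞)

/-- `f ∈ L^p(v)`. -/
def MemLpW {n : ℕ} (f : Rn n → ℝ) (p : ℝ) (v : Rn n → ℝ≥0∞) : Prop :=
  Measurable f ∧ lpNorm (eAbs f) p v ≠ ∞

/-- The bilinear sparse operator `A_{D,S}(g₁,g₂) = ∑_{Q∈S} ⟨g₁⟩_Q ⟨g₂⟩_Q χ_Q`. -/
def sparseOp {n : ℕ} (S : Set (Set (Rn n))) (g1 g2 : Rn n → ℝ≥0∞) (x : Rn n) : ℝ≥0∞ :=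
  ∑' Q : S, Set.indicator (Q : Set (Rn n)) (fun _ => avg g1 Q * avg g2 Q) x

/-- The weighted average `⟨f⟩_Q^w = (∫_Q |f| w)/w(Q)`. -/
def wAvg {n : ℕ} (f : Rn n → ℝ) (w : Rn n → ℝ≥0∞) (Q : Set (Rn n)) : ℝ≥0∞ :=
  (∫⁻ x in Q, (‖f x‖₊ : ℝ≥0∞) * w x) / mass w Q


/-- The exponent `β = 1/p + max{min{1/p₁', (1/p₁')(p₂'/p)}, min{1/p₂', (1/p₂')(p₁'/p)}}`. -/
def betaExp (p p1 p2 : ℝ) : ℝ :=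
  1 / p + max (min (1 / conj p1) (1 / conj p1 * (conj p2 / p)))
              (min (1 / conj p2) (1 / conj p2 * (conj p1 / p)))

/-- The exponent `γ = max{1, p₁'/p, p₂'/p}`. -/
def gammaExp (p p1 p2 : ℝ) : ℝ := max 1 (max (conj p1 / p) (conj p2 / p))

end


section AuxLemmas
open Function

private lemma iSup_rpow_aux {ι : Sort*} (f : ι → ℝ≥0∞) {α : ℝ} (hα : 0 < α) :
    (⨆ i, f i) ^ α = ⨆ i, f i ^ α := by
  refine le_antisymm ?_ (iSup_le fun i => ENNReal.rpow_le_rpow (le_iSup f i) hα.le)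
  have h1 : (⨆ i, f i) ≤ (⨆ i, f i ^ α) ^ (1 / α) := by
    refine iSup_le fun i => ?_
    have h2 : f i = (f i ^ α) ^ (1 / α) := by
      rw [← ENNReal.rpow_mul, mul_one_div, div_self hα.ne', ENNReal.rpow_one]
    rw [h2]
    exact ENNReal.rpow_le_rpow (le_iSup (fun j => f j ^ α) i) (by positivity)
  calc (⨆ i, f i) ^ α ≤ ((⨆ i, f i ^ α) ^ (1 / α)) ^ α :=
        ENNReal.rpow_le_rpow h1 hα.le
    _ = ⨆ i, f i ^ α := by
        rw [← ENNReal.rpow_mul, one_div_mul_cancel hα.ne', ENNReal.rpow_one]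

private lemma cube_volume {n : ℕ} {Q : Set (Rn n)} (hQ : IsCube Q) :
    0 < volume Q ∧ volume Q ≠ ∞ := by
  obtain ⟨h, hh, c, rfl⟩ := hQ
  have hs : {x : Rn n | ∀ i, c i ≤ x i ∧ x i < c i + h} =
      Set.pi Set.univ (fun i => Set.Ico (c i) (c i + h)) := by
    ext x; simp [Set.mem_pi, Set.mem_Ico]
  rw [hs, volume_pi_pi]
  have hv : ∀ i : Fin n, volume (Set.Ico (c i) (c i + h)) = ENNReal.ofReal h := by
    intro i; rw [Real.volume_Ico]; congr 1; ring
  simp only [hv, Finset.prod_const, Finset.card_univ, Fintype.card_fin]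
  exact ⟨pos_iff_ne_zero.mpr (pow_ne_zero n (ENNReal.ofReal_pos.mpr hh).ne'), ENNReal.pow_ne_top ENNReal.ofReal_ne_top⟩

private lemma perCube {n : ℕ} (p p1 p2 q : ℝ)
    (hp1 : 1 < p1) (hp2 : 1 < p2) (hp : 1 / p = 1 / p1 + 1 / p2) (hp0 : 1 < p)
    (hq : 1 / q = 1 / conj p + 1 / p2)
    (w1 w2 : Rn n → ℝ≥0∞) (hm1 : Measurable w1) (hm2 : Measurable w2)
    (Q : Set (Rn n)) (hQ : IsCube Q)
    (hf1 : (∫⁻ x in Q, w1 x) ≠ ∞) (hf2 : (∫⁻ x in Q, w2 x) ≠ ∞) :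
    avg (vweight q (conj p) p2 (fun x => vweight p p1 p2 w1 w2 x ^ (1 - conj p)) w2) Q *
      avg (dualW (conj p) (fun x => vweight p p1 p2 w1 w2 x ^ (1 - conj p))) Q ^
        (q / conj (conj p)) *
      avg (dualW p2 w2) Q ^ (q / conj p2) =
    (avg (vweight p p1 p2 w1 w2) Q * avg (dualW p1 w1) Q ^ (p / conj p1) *
      avg (dualW p2 w2) Q ^ (p / conj p2)) ^ (conj p1 / p) := by
  -- real-number facts
  have hp0' : (0:ℝ) < p := by linarith
  have hpm : (0:ℝ) < p - 1 := by linarith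
  have hp1p : (0:ℝ) < p1 := by linarith
  have hp2p : (0:ℝ) < p2 := by linarith
  have hp1m : (0:ℝ) < p1 - 1 := by linarith
  have hp2m : (0:ℝ) < p2 - 1 := by linarith
  have hcp_pos : 0 < conj p := div_pos hp0' hpm
  have hcp1_pos : 0 < conj p1 := div_pos hp1p hp1m
  have hcp2_pos : 0 < conj p2 := div_pos hp2p hp2m
  have hcc : conj (conj p) = p := by
    unfold conj
    have h1 : p / (p - 1) - 1 = 1 / (p - 1) := by field_simp; ring
    rw [h1]; field_simp
  have hq1 : q = conj p1 := by
    have hiq : 1 / q = 1 / conj p1 := by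
      rw [hq]; unfold conj
      rw [one_div_div, one_div_div]
      have e : ∀ r : ℝ, 0 < r → (r - 1) / r = 1 - 1 / r := by
        intro r hr; field_simp
      rw [e p hp0', e p1 hp1p]; linarith
    rw [← one_div_one_div q, hiq, one_div_one_div]
  have hα : 0 < conj p1 / p := div_pos hcp1_pos hp0'
  have hβ : 0 < q / conj p2 := by rw [hq1]; exact div_pos hcp1_pos hcp2_pos
  have hneg1 : 1 - conj p1 < 0 := by
    have : 1 < conj p1 := by
      unfold conj; rw [lt_div_iff₀ hp1m]; linarith
    linarith
  have hneg2 : 1 - conj p2 < 0 := by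
    have : 1 < conj p2 := by
      unfold conj; rw [lt_div_iff₀ hp2m]; linarith
    linarith
  have hpp1 : (0:ℝ) ≤ p / p1 := (div_pos hp0' hp1p).le
  have hpp2pos : (0:ℝ) < p / p2 := div_pos hp0' hp2p
  have hpp1pos : (0:ℝ) < p / p1 := div_pos hp0' hp1p
  have hE1 : (1 - conj p) * (1 - conj (conj p)) = 1 := by
    rw [hcc]; unfold conj; field_simp; ring
  have hE2 : (1 - conj p) * (q / conj p) = -(q / p) := by
    unfold conj; field_simp; ring
  have hE3 : p / p1 * (-(q / p)) = 1 - conj p1 := by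
    rw [hq1]; unfold conj; field_simp; ring
  have hE4 : p / p2 * (-(q / p)) + q / p2 = 0 := by
    field_simp; ring
  have hE5 : p / conj p1 * (conj p1 / p) = 1 := by
    field_simp
  have hE6 : p / conj p2 * (conj p1 / p) = q / conj p2 := by
    rw [hq1]; field_simp
  have hmidexp : q / conj (conj p) = conj p1 / p := by rw [hcc, hq1]
  -- the pointwise key identity
  have key : ∀ a b : ℝ≥0∞, a ≠ ∞ → b ≠ 0 → b ≠ ∞ →
      ((a ^ (p / p1) * b ^ (p / p2)) ^ (1 - conj p)) ^ (q / conj p) * b ^ (q / p2) =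
        a ^ (1 - conj p1) := by
    intro a b ha hb0 hbt
    rw [← ENNReal.rpow_mul, hE2,
      ENNReal.mul_rpow_of_ne_top (ENNReal.rpow_ne_top_of_nonneg hpp1 ha)
        (ENNReal.rpow_ne_top_of_nonneg hpp2pos.le hbt),
      ← ENNReal.rpow_mul, ← ENNReal.rpow_mul, hE3, mul_assoc,
      ← ENNReal.rpow_add _ _ hb0 hbt, hE4, ENNReal.rpow_zero, mul_one]
  obtain ⟨hv0, hvt⟩ := cube_volume hQ
  -- the middle factor collapses
  have hmid : (dualW (conj p) fun x => vweight p p1 p2 w1 w2 x ^ (1 - conj p)) =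
      vweight p p1 p2 w1 w2 := by
    funext x; unfold dualW
    rw [← ENNReal.rpow_mul, hE1, ENNReal.rpow_one]
  rw [hmid, hmidexp,
    ENNReal.mul_rpow_of_nonneg _ _ hα.le, ENNReal.mul_rpow_of_nonneg _ _ hα.le,
    ← ENNReal.rpow_mul, ← ENNReal.rpow_mul, hE5, hE6, ENNReal.rpow_one]
  -- a.e. finiteness
  have hN1 : (volume.restrict Q) {x | w1 x = ∞} = 0 := by
    have h := ae_lt_top hm1 hf1
    rw [ae_iff] at h
    simpa only [not_lt, top_le_iff] using h
  have hN2 : (volume.restrict Q) {x | w2 x = ∞} = 0 := by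
    have h := ae_lt_top hm2 hf2
    rw [ae_iff] at h
    simpa only [not_lt, top_le_iff] using h
  have hae1 : ∀ᵐ x ∂(volume.restrict Q), w1 x ≠ ∞ := by
    rw [ae_iff]; simpa using hN1
  have hae2 : ∀ᵐ x ∂(volume.restrict Q), w2 x ≠ ∞ := by
    rw [ae_iff]; simpa using hN2
  by_cases hzero : (volume.restrict Q) {x | w2 x = 0} = 0
  · -- w₂ ≠ 0 a.e. on Q : the two weights agree a.e.
    have haez : ∀ᵐ x ∂(volume.restrict Q), w2 x ≠ 0 := by
      rw [ae_iff]; simpa using hzero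
    have hmass : mass (vweight q (conj p) p2
        (fun x => vweight p p1 p2 w1 w2 x ^ (1 - conj p)) w2) Q = mass (dualW p1 w1) Q := by
      unfold mass
      refine lintegral_congr_ae ?_
      filter_upwards [hae1, hae2, haez] with x h1 h2 h3
      simp only [vweight, dualW]
      exact key (w1 x) (w2 x) h1 h3 h2
    have havg : avg (vweight q (conj p) p2
        (fun x => vweight p p1 p2 w1 w2 x ^ (1 - conj p)) w2) Q = avg (dualW p1 w1) Q := by
      unfold avg; rw [hmass]
    rw [havg]; ring
  · -- |{w₂ = 0} ∩ Q| > 0 : both sides are 0 or ∞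
    have hmeasZ : MeasurableSet {x | w2 x = 0} := hm2 (measurableSet_singleton 0)
    have hS2top : mass (dualW p2 w2) Q = ∞ := by
      have hconst : ∫⁻ x in {x | w2 x = 0}, dualW p2 w2 x ∂(volume.restrict Q) = ∞ := by
        have hpt : ∀ x ∈ {x | w2 x = 0}, dualW p2 w2 x = (∞ : ℝ≥0∞) := by
          intro x hx
          simp only [Set.mem_setOf_eq] at hx
          simp only [dualW, hx]
          exact ENNReal.zero_rpow_of_neg hneg2
        rw [setLIntegral_congr_fun hmeasZ hpt, setLIntegral_const]
        exact ENNReal.top_mul hzero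
      exact top_le_iff.mp (hconst ▸ setLIntegral_le_lintegral _ _)
    have hS2 : avg (dualW p2 w2) Q ^ (q / conj p2) = ∞ := by
      have : avg (dualW p2 w2) Q = ∞ := by
        unfold avg; rw [hS2top]
        exact ENNReal.div_eq_top.mpr (Or.inr ⟨rfl, hvt⟩)
      rw [this]; exact ENNReal.top_rpow_of_pos hβ
    by_cases hV : mass (vweight p p1 p2 w1 w2) Q = 0
    · have hV0 : avg (vweight p p1 p2 w1 w2) Q = 0 := by
        unfold avg; rw [hV, ENNReal.zero_div]
      rw [hV0, ENNReal.zero_rpow_of_pos hα]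
      simp
    · -- positivity of all factors, so both sides are ∞
      have hVavg : avg (vweight p p1 p2 w1 w2) Q ≠ 0 := by
        unfold avg; simp [ENNReal.div_eq_zero_iff, hV, hvt]
      have hVα : avg (vweight p p1 p2 w1 w2) Q ^ (conj p1 / p) ≠ 0 := by
        intro h
        rcases ENNReal.rpow_eq_zero_iff.mp h with ⟨h1, _⟩ | ⟨_, h2⟩
        · exact hVavg h1
        · exact absurd hα (not_lt.mpr h2.le)
      have hvvmeas : Measurable (vweight p p1 p2 w1 w2) :=
        (hm1.pow_const _).mul (hm2.pow_const _)
      have hv'meas : Measurable (vweight q (conj p) p2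
          (fun x => vweight p p1 p2 w1 w2 x ^ (1 - conj p)) w2) :=
        ((hvvmeas.pow_const _).pow_const _).mul (hm2.pow_const _)
      have hsupp : 0 < (volume.restrict Q) (support (vweight p p1 p2 w1 w2)) :=
        (lintegral_pos_iff_support hvvmeas).mp (pos_iff_ne_zero.mpr hV)
      have hNnull : (volume.restrict Q) ({x | w1 x = ∞} ∪ {x | w2 x = ∞}) = 0 :=
        measure_union_null hN1 hN2
      have hsub : support (vweight p p1 p2 w1 w2) \ ({x | w1 x = ∞} ∪ {x | w2 x = ∞}) ⊆
          support (vweight q (conj p) p2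
            (fun x => vweight p p1 p2 w1 w2 x ^ (1 - conj p)) w2) := by
        rintro x ⟨hx, hxN⟩
        simp only [Set.mem_union, Set.mem_setOf_eq, not_or] at hxN
        obtain ⟨h1t, h2t⟩ := hxN
        have hx' : vweight p p1 p2 w1 w2 x ≠ 0 := hx
        have h20 : w2 x ≠ 0 := by
          intro h
          apply hx'
          simp only [vweight, h, ENNReal.zero_rpow_of_pos hpp2pos, mul_zero]
        have h10 : w1 x ≠ 0 := by
          intro h
          apply hx'
          simp only [vweight, h, ENNReal.zero_rpow_of_pos hpp1pos, zero_mul]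
        have : vweight q (conj p) p2
            (fun x => vweight p p1 p2 w1 w2 x ^ (1 - conj p)) w2 x = w1 x ^ (1 - conj p1) := by
          simp only [vweight]
          exact key (w1 x) (w2 x) h1t h20 h2t
        simp only [mem_support, this]
        intro h
        rcases ENNReal.rpow_eq_zero_iff.mp h with ⟨h1, _⟩ | ⟨h1, _⟩
        · exact h10 h1
        · exact h1t h1
      have hV'mass : mass (vweight q (conj p) p2
          (fun x => vweight p p1 p2 w1 w2 x ^ (1 - conj p)) w2) Q ≠ 0 := by
        refine pos_iff_ne_zero.mp ((lintegral_pos_iff_support hv'meas).mpr ?_)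
        calc 0 < (volume.restrict Q) (support (vweight p p1 p2 w1 w2) \
              ({x | w1 x = ∞} ∪ {x | w2 x = ∞})) := by
              rw [measure_diff_null hNnull]; exact hsupp
          _ ≤ _ := measure_mono hsub
      have hV' : avg (vweight q (conj p) p2
          (fun x => vweight p p1 p2 w1 w2 x ^ (1 - conj p)) w2) Q ≠ 0 := by
        unfold avg; simp [ENNReal.div_eq_zero_iff, hV'mass, hvt]
      have hS1mass : mass (dualW p1 w1) Q ≠ 0 := by
        refine pos_iff_ne_zero.mp ((lintegral_pos_iff_support (hm1.pow_const _)).mpr ?_)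
        have hsub2 : {x | w1 x ≠ ∞} ⊆ support (dualW p1 w1) := by
          intro x hx
          simp only [Set.mem_setOf_eq] at hx
          simp only [mem_support, dualW]
          intro h
          rcases ENNReal.rpow_eq_zero_iff.mp h with ⟨_, h2⟩ | ⟨h1, _⟩
          · linarith
          · exact hx h1
        have heq : {x : Rn n | w1 x ≠ ∞} = Set.univ \ {x | w1 x = ∞} := by
          ext x; simp
        calc 0 < (volume.restrict Q) Set.univ := by
              rw [Measure.restrict_apply_univ]; exact hv0
          _ = (volume.restrict Q) {x | w1 x ≠ ∞} := by
              rw [heq, measure_diff_null hN1]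
          _ ≤ _ := measure_mono hsub2
      have hS1 : avg (dualW p1 w1) Q ≠ 0 := by
        unfold avg; simp [ENNReal.div_eq_zero_iff, hS1mass, hvt]
      rw [hS2, ENNReal.mul_top (mul_ne_zero hV' hVα),
        ENNReal.mul_top (mul_ne_zero hVα hS1)]

end AuxLemmas

/-- If `\vec w = (w₁, w₂) ∈ A_{(p₁,p₂)}` then `\vec w¹ = (v_{\vec w}^{1-p'}, w₂) ∈ A_{(p',p₂)}`
with `[\vec w¹]_{A_{\vec P¹}} = [\vec w]_{A_{\vec P}}^{p₁'/p}`. -/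
theorem statement3 {n : ℕ} (p p1 p2 q : ℝ)
    (hp1 : 1 < p1) (hp2 : 1 < p2) (hp : 1 / p = 1 / p1 + 1 / p2) (hp0 : 1 < p)
    (hq : 1 / q = 1 / conj p + 1 / p2)
    (w1 w2 : Rn n → ℝ≥0∞) (hw1 : IsWeight w1) (hw2 : IsWeight w2)
    (hAP : APconst p p1 p2 w1 w2 ≠ ∞) :
    APconst q (conj p) p2 (fun x => vweight p p1 p2 w1 w2 x ^ (1 - conj p)) w2 ≠ ∞ ∧
    APconst q (conj p) p2 (fun x => vweight p p1 p2 w1 w2 x ^ (1 - conj p)) w2 =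
      APconst p p1 p2 w1 w2 ^ (conj p1 / p) := by
  have hp0' : (0:ℝ) < p := by linarith
  have hα : 0 < conj p1 / p := by
    apply div_pos _ hp0'
    unfold conj
    exact div_pos (by linarith) (by linarith)
  have hmain : APconst q (conj p) p2 (fun x => vweight p p1 p2 w1 w2 x ^ (1 - conj p)) w2 =
      APconst p p1 p2 w1 w2 ^ (conj p1 / p) := by
    unfold APconst
    rw [iSup_rpow_aux _ hα]
    refine iSup_congr fun Q => ?_
    rw [iSup_rpow_aux _ hα]
    exact iSup_congr fun hQ =>
      perCube p p1 p2 q hp1 hp2 hp hp0 hq w1 w2 hw1.1 hw2.1 Q hQ (hw1.2 Q hQ) (hw2.2 Q hQ)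
  exact ⟨hmain ▸ ENNReal.rpow_ne_top_of_nonneg hα.le hAP, hmain⟩
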